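/- arXiv:2305.09292 — 2 statements merged into one kernel-verified Lean document; each statement's English description precedes it below -/
import Mathlib

section
/- Let V be a finite set with a positive measure π, let P be a self-adjoint Markov operator on ℓ²(V, π) (i.e. P is given by a Markov kernel reversible with respect to π), let B ⊂ V, and let c ∈ (0, 1). Suppose that for every g : V → ℝ with g|_B ≡ 0 one has ⟨g − P g, g⟩_{ℓ²(π)} ≥ c ‖g‖²_{ℓ²(π)}. Define the Dirichlet-restricted operator P_B f = 1_{V∖B} · P(1_{V∖B} · f). Then the ℓ²(π) → ℓ²(π) operator norm of P_B satisfies ‖P_B‖ ≤ 1 − c. -/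
open Finset

section Aux

variable {V : Type*} [Fintype V]

/-- Dirichlet-restricted operator. -/
def TB (p : V → V → ℝ) (B : Set V) [DecidablePred (· ∈ B)] (u : V → ℝ) : V → ℝ :=
  fun w => if w ∈ B then 0 else ∑ v, p w v * (if v ∈ B then 0 else u v)

/-- Weighted inner product. -/
def ipp (π : V → ℝ) (u v : V → ℝ) : ℝ := ∑ w, u w * v w * π w

lemma TB_apply (p : V → V → ℝ) (B : Set V) [DecidablePred (· ∈ B)] (u : V → ℝ) (w : V) :
    TB p B u w = if w ∈ B then 0 else ∑ v, p w v * (if v ∈ B then 0 else u v) := rfl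

lemma ipp_def (π : V → ℝ) (u v : V → ℝ) : ipp π u v = ∑ w, u w * v w * π w := rfl

lemma ip_TB (π : V → ℝ) (p : V → V → ℝ) (B : Set V) [DecidablePred (· ∈ B)]
    (u v : V → ℝ) :
    ipp π (TB p B u) v
      = ∑ w, ∑ x, π w * p w x *
          ((if x ∈ B then 0 else u x) * (if w ∈ B then 0 else v w)) := by
  rw [ipp_def]
  refine Finset.sum_congr rfl fun w _ => ?_
  rw [TB_apply]
  by_cases hw : w ∈ B
  · simp [hw]
  · simp only [if_neg hw]
    rw [Finset.sum_mul, Finset.sum_mul]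
    exact Finset.sum_congr rfl fun x _ => by ring

lemma TB_symm (π : V → ℝ) (p : V → V → ℝ) (hrev : ∀ w v, π w * p w v = π v * p v w)
    (B : Set V) [DecidablePred (· ∈ B)] (u v : V → ℝ) :
    ipp π (TB p B u) v = ipp π (TB p B v) u := by
  rw [ip_TB, ip_TB, Finset.sum_comm]
  refine Finset.sum_congr rfl fun a _ => Finset.sum_congr rfl fun b _ => ?_
  rw [hrev b a]
  ring

lemma form_bound (π : V → ℝ) (hπ : ∀ w, 0 < π w)
    (p : V → V → ℝ) (hp : ∀ w v, 0 ≤ p w v)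
    (B : Set V) [DecidablePred (· ∈ B)]
    (c : ℝ) (hc1 : c < 1)
    (hgap : ∀ g : V → ℝ, (∀ x ∈ B, g x = 0) →
      c * ∑ w, g w ^ 2 * π w ≤ ∑ w, (g w - ∑ v, p w v * g v) * g w * π w)
    (u : V → ℝ) :
    |ipp π (TB p B u) u| ≤ (1 - c) * ipp π u u := by
  set g : V → ℝ := fun w => if w ∈ B then 0 else |u w| with hg
  have hgB : ∀ x ∈ B, g x = 0 := fun x hx => by simp [hg, hx]
  have h1 : |ipp π (TB p B u) u| ≤ ∑ w, ∑ x, π w * p w x * (g x * g w) := by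
    rw [ip_TB]
    refine (Finset.abs_sum_le_sum_abs _ _).trans ?_
    refine Finset.sum_le_sum fun w _ => ?_
    refine (Finset.abs_sum_le_sum_abs _ _).trans ?_
    refine Finset.sum_le_sum fun x _ => ?_
    have e1 : |if x ∈ B then (0:ℝ) else u x| = g x := by
      by_cases hx : x ∈ B <;> simp [hg, hx]
    have e2 : |if w ∈ B then (0:ℝ) else u w| = g w := by
      by_cases hw : w ∈ B <;> simp [hg, hw]
    rw [abs_mul, abs_mul, abs_mul, e1, e2, abs_of_nonneg (hπ w).le, abs_of_nonneg (hp w x)]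
  have h2 : ∑ w, ∑ x, π w * p w x * (g x * g w) = ∑ w, (∑ x, p w x * g x) * g w * π w := by
    refine Finset.sum_congr rfl fun w _ => ?_
    rw [Finset.sum_mul, Finset.sum_mul]
    exact Finset.sum_congr rfl fun x _ => by ring
  have h3 := hgap g hgB
  have h4 : ∑ w, (g w - ∑ v, p w v * g v) * g w * π w
      = ∑ w, g w ^ 2 * π w - ∑ w, (∑ v, p w v * g v) * g w * π w := by
    rw [← Finset.sum_sub_distrib]
    exact Finset.sum_congr rfl fun w _ => by ring
  rw [h4] at h3
  have h5 : ∑ w, (∑ v, p w v * g v) * g w * π w ≤ (1 - c) * ∑ w, g w ^ 2 * π w := by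
    nlinarith [h3]
  have h6 : ∑ w, g w ^ 2 * π w ≤ ∑ w, u w ^ 2 * π w := by
    refine Finset.sum_le_sum fun w _ => ?_
    have hgw : g w ^ 2 ≤ u w ^ 2 := by
      by_cases hw : w ∈ B <;> simp [hg, hw, sq_abs] <;> positivity
    exact mul_le_mul_of_nonneg_right hgw (hπ w).le
  have h7 : ipp π u u = ∑ w, u w ^ 2 * π w :=
    Finset.sum_congr rfl fun w _ => by ring
  rw [h7]
  calc |ipp π (TB p B u) u| ≤ ∑ w, ∑ x, π w * p w x * (g x * g w) := h1
    _ = ∑ w, (∑ x, p w x * g x) * g w * π w := h2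
    _ ≤ (1 - c) * ∑ w, g w ^ 2 * π w := h5
    _ ≤ (1 - c) * ∑ w, u w ^ 2 * π w :=
        mul_le_mul_of_nonneg_left h6 (by linarith)

lemma ipp_expand (π : V → ℝ) (f h : V → ℝ) (t : ℝ) :
    ipp π (fun w => f w + t * h w) (fun w => f w + t * h w)
      = ipp π f f + 2 * t * ipp π f h + t ^ 2 * ipp π h h := by
  simp only [ipp_def, Finset.mul_sum]
  rw [← Finset.sum_add_distrib, ← Finset.sum_add_distrib]
  exact Finset.sum_congr rfl fun w _ => by ring

lemma ipTB_expand (π : V → ℝ) (p : V → V → ℝ) (B : Set V) [DecidablePred (· ∈ B)]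
    (f h : V → ℝ) (t : ℝ) :
    ipp π (TB p B (fun w => f w + t * h w)) (fun w => f w + t * h w)
      = ipp π (TB p B f) f + t * ipp π (TB p B f) h
        + t * ipp π (TB p B h) f + t ^ 2 * ipp π (TB p B h) h := by
  simp only [ip_TB, Finset.mul_sum]
  rw [← Finset.sum_add_distrib, ← Finset.sum_add_distrib, ← Finset.sum_add_distrib]
  refine Finset.sum_congr rfl fun w _ => ?_
  rw [← Finset.sum_add_distrib, ← Finset.sum_add_distrib, ← Finset.sum_add_distrib]
  refine Finset.sum_congr rfl fun x _ => ?_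
  by_cases hx : x ∈ B <;> by_cases hw : w ∈ B <;> simp [hx, hw] <;> ring

end Aux

theorem stmt1 {V : Type*} [Fintype V]
    (π : V → ℝ) (hπ : ∀ w, 0 < π w)
    (p : V → V → ℝ)
    (hp : ∀ w v, 0 ≤ p w v)
    (hrow : ∀ w, ∑ v, p w v = 1)
    (hrev : ∀ w v, π w * p w v = π v * p v w)
    (B : Set V) [DecidablePred (· ∈ B)]
    (c : ℝ) (hc0 : 0 < c) (hc1 : c < 1)
    (hgap : ∀ g : V → ℝ, (∀ x ∈ B, g x = 0) →
      c * ∑ w, g w ^ 2 * π w ≤ ∑ w, (g w - ∑ v, p w v * g v) * g w * π w) :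
    ∀ f : V → ℝ,
      ∑ w, (if w ∈ B then (0 : ℝ) else ∑ v, p w v * (if v ∈ B then 0 else f v)) ^ 2 * π w
        ≤ (1 - c) ^ 2 * ∑ w, f w ^ 2 * π w := by
  intro f
  have key : ∀ t : ℝ,
      2 * t * ipp π (TB p B f) (TB p B f)
        ≤ (1 - c) * (ipp π f f + t ^ 2 * ipp π (TB p B f) (TB p B f)) := by
    intro t
    have s := TB_symm π p hrev B (TB p B f) f
    have sf : ipp π (TB p B f) (TB p B f) = ipp π (TB p B f) (TB p B f) := rfl
    have e1 := ipTB_expand π p B f (TB p B f) t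
    have e2 := ipTB_expand π p B f (TB p B f) (-t)
    rw [s] at e1 e2
    have ee1 := ipp_expand π f (TB p B f) t
    have ee2 := ipp_expand π f (TB p B f) (-t)
    have fb1 := form_bound π hπ p hp B c hc1 hgap (fun w => f w + t * TB p B f w)
    have fb2 := form_bound π hπ p hp B c hc1 hgap (fun w => f w + (-t) * TB p B f w)
    rw [abs_le] at fb1 fb2
    obtain ⟨fb1l, fb1r⟩ := fb1
    obtain ⟨fb2l, fb2r⟩ := fb2
    rw [e1, ee1] at fb1r
    rw [e2, ee2] at fb2l
    linarith [fb1r, fb2l]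
  have hA : 0 ≤ ipp π (TB p B f) (TB p B f) := by
    rw [ipp_def]
    exact Finset.sum_nonneg fun w _ => mul_nonneg (mul_self_nonneg _) (hπ w).le
  have hb : 0 ≤ ipp π f f := by
    rw [ipp_def]
    exact Finset.sum_nonneg fun w _ => mul_nonneg (mul_self_nonneg _) (hπ w).le
  have main : ipp π (TB p B f) (TB p B f) ≤ (1 - c) ^ 2 * ipp π f f := by
    rcases eq_or_lt_of_le hA with hA0 | hApos
    · rw [← hA0]
      positivity
    · rcases eq_or_lt_of_le hb with hb0 | hbpos
      · have h1 := key 1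
        rw [← hb0] at h1 ⊢
        nlinarith [mul_pos hc0 hApos]
      · set A := ipp π (TB p B f) (TB p B f) with hAdef
        set b := ipp π f f with hbdef
        set sa := Real.sqrt A with hsa
        set sb := Real.sqrt b with hsb
        have hsa2 : sa ^ 2 = A := Real.sq_sqrt hA
        have hsb2 : sb ^ 2 = b := Real.sq_sqrt hb
        have hsa0 : 0 < sa := Real.sqrt_pos.mpr hApos
        have hsb0 : 0 < sb := Real.sqrt_pos.mpr hbpos
        have h1 := key (sb / sa)
        have ht2 : (sb / sa) ^ 2 * A = b := by
          field_simp
          nlinarith [hsa2, hsb2]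
        have htA : (sb / sa) * A = sb * sa := by
          field_simp
          nlinarith [hsa2]
        rw [ht2] at h1
        -- h1 : 2 * (sb / sa) * A ≤ (1 - c) * (b + b)
        have h2 : 2 * (sb * sa) ≤ (1 - c) * (2 * b) := by nlinarith [h1, htA]
        have h3 : sa ≤ (1 - c) * sb := by nlinarith [h2, hsb0, hsb2]
        have h4 := mul_le_mul h3 h3 hsa0.le (le_trans hsa0.le h3)
        nlinarith [h4, hsa2, hsb2]
  have gl : ∑ w, (if w ∈ B then (0 : ℝ) else ∑ v, p w v * (if v ∈ B then 0 else f v)) ^ 2 * π w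
      = ipp π (TB p B f) (TB p B f) := by
    rw [ipp_def]
    refine Finset.sum_congr rfl fun w _ => ?_
    rw [TB_apply]
    ring
  have gr : ∑ w, f w ^ 2 * π w = ipp π f f := by
    rw [ipp_def]
    exact Finset.sum_congr rfl fun w _ => by ring
  rw [gl, gr]
  exact main
end

section
/- Let G = (V, E) be a finite graph, let A, B ⊂ V be disjoint nonempty sets, and suppose there is a bijection φ : A → B such that {v, φ(v)} ∈ E for every v ∈ A. Then for every f : V → ℝ, (Σ_{v ∈ A} f(v) − Σ_{v ∈ B} f(v))² ≤ #A · D(f), where D(f) = Σ_{{w, w'} ∈ E} (f(w) − f(w'))². In particular, (avg_A f − avg_B f)² ≤ D(f) / #A. -/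
open Finset

theorem stmt5 {V : Type*} [Fintype V] [DecidableEq V]
    (G : SimpleGraph V) [DecidableRel G.Adj]
    (A B : Finset V) (hA : A.Nonempty) (hB : B.Nonempty) (hdisj : Disjoint A B)
    (φ : V → V) (hφ : Set.BijOn φ ↑A ↑B) (hadj : ∀ v ∈ A, G.Adj v (φ v))
    (f : V → ℝ) :
    ((∑ v ∈ A, f v) - ∑ v ∈ B, f v) ^ 2
        ≤ A.card * ((1 : ℝ) / 2 * ∑ w, ∑ w', if G.Adj w w' then (f w - f w') ^ 2 else 0) ∧
    ((∑ v ∈ A, f v) / A.card - (∑ v ∈ B, f v) / B.card) ^ 2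
        ≤ ((1 : ℝ) / 2 * ∑ w, ∑ w', if G.Adj w w' then (f w - f w') ^ 2 else 0) / A.card := by
  set D : ℝ := (1 : ℝ) / 2 * ∑ w, ∑ w', if G.Adj w w' then (f w - f w') ^ 2 else 0 with hD
  have himg : A.image φ = B := by
    apply Finset.coe_injective
    rw [Finset.coe_image]
    exact hφ.image_eq
  have hinj : Set.InjOn φ ↑A := hφ.injOn
  have hsumB : ∑ v ∈ B, f v = ∑ v ∈ A, f (φ v) := by
    rw [← himg, Finset.sum_image (fun a ha b hb h => hinj ha hb h)]
  have hcardB : B.card = A.card := by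
    rw [← himg, Finset.card_image_of_injOn hinj]
  -- nonnegativity of edge terms
  have hnn : ∀ w w' : V, (0:ℝ) ≤ if G.Adj w w' then (f w - f w') ^ 2 else 0 := by
    intro w w'; split <;> positivity
  -- the key energy bound
  have hkey : ∑ v ∈ A, (f v - f (φ v)) ^ 2 ≤ D := by
    have hAle : ∀ v ∈ A, (f v - f (φ v)) ^ 2
        ≤ ∑ w', if G.Adj v w' then (f v - f w') ^ 2 else 0 := by
      intro v hv
      have := Finset.single_le_sum (f := fun w' => if G.Adj v w' then (f v - f w') ^ 2 else 0)
        (fun i _ => hnn v i) (Finset.mem_univ (φ v))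
      simpa [if_pos (hadj v hv)] using this
    have hBle : ∀ v ∈ A, (f v - f (φ v)) ^ 2
        ≤ ∑ w', if G.Adj (φ v) w' then (f (φ v) - f w') ^ 2 else 0 := by
      intro v hv
      have := Finset.single_le_sum (f := fun w' => if G.Adj (φ v) w' then (f (φ v) - f w') ^ 2 else 0)
        (fun i _ => hnn (φ v) i) (Finset.mem_univ v)
      have hadj' : G.Adj (φ v) v := (hadj v hv).symm
      have : (f (φ v) - f v) ^ 2 ≤ ∑ w', if G.Adj (φ v) w' then (f (φ v) - f w') ^ 2 else 0 := by
        simpa [if_pos hadj'] using this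
      calc (f v - f (φ v)) ^ 2 = (f (φ v) - f v) ^ 2 := by ring
        _ ≤ _ := this
    have hsplit : ∑ w ∈ A ∪ B, ∑ w', (if G.Adj w w' then (f w - f w') ^ 2 else 0)
        ≤ ∑ w, ∑ w', (if G.Adj w w' then (f w - f w') ^ 2 else 0) := by
      apply Finset.sum_le_sum_of_subset_of_nonneg (Finset.subset_univ _)
      intro i _ _
      exact Finset.sum_nonneg fun j _ => hnn i j
    have hsplit2 : ∑ w ∈ A ∪ B, ∑ w', (if G.Adj w w' then (f w - f w') ^ 2 else 0)
        = (∑ w ∈ A, ∑ w', (if G.Adj w w' then (f w - f w') ^ 2 else 0))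
          + ∑ w ∈ B, ∑ w', (if G.Adj w w' then (f w - f w') ^ 2 else 0) := by
      rw [Finset.sum_union hdisj]
    have hBsum : ∑ w ∈ B, ∑ w', (if G.Adj w w' then (f w - f w') ^ 2 else 0)
        = ∑ v ∈ A, ∑ w', (if G.Adj (φ v) w' then (f (φ v) - f w') ^ 2 else 0) := by
      rw [← himg, Finset.sum_image (fun a ha b hb h => hinj ha hb h)]
    have h2 : 2 * ∑ v ∈ A, (f v - f (φ v)) ^ 2
        ≤ ∑ w, ∑ w', (if G.Adj w w' then (f w - f w') ^ 2 else 0) := by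
      calc 2 * ∑ v ∈ A, (f v - f (φ v)) ^ 2
          = (∑ v ∈ A, (f v - f (φ v)) ^ 2) + ∑ v ∈ A, (f v - f (φ v)) ^ 2 := by ring
        _ ≤ (∑ w ∈ A, ∑ w', (if G.Adj w w' then (f w - f w') ^ 2 else 0))
            + ∑ v ∈ A, ∑ w', (if G.Adj (φ v) w' then (f (φ v) - f w') ^ 2 else 0) :=
            add_le_add (Finset.sum_le_sum hAle) (Finset.sum_le_sum hBle)
        _ = ∑ w ∈ A ∪ B, ∑ w', (if G.Adj w w' then (f w - f w') ^ 2 else 0) := by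
            rw [hsplit2, hBsum]
        _ ≤ _ := hsplit
    rw [hD]
    linarith
  have hCS : ((∑ v ∈ A, f v) - ∑ v ∈ B, f v) ^ 2
      ≤ (A.card : ℝ) * ∑ v ∈ A, (f v - f (φ v)) ^ 2 := by
    have := sq_sum_le_card_mul_sum_sq (s := A) (f := fun v => f v - f (φ v))
    rw [hsumB, ← Finset.sum_sub_distrib]
    exact_mod_cast this
  have hDnn : 0 ≤ D := by
    rw [hD]
    have : 0 ≤ ∑ w, ∑ w', (if G.Adj w w' then (f w - f w') ^ 2 else 0) :=
      Finset.sum_nonneg fun i _ => Finset.sum_nonneg fun j _ => hnn i j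
    linarith
  have hAcard : (0:ℝ) < A.card := by exact_mod_cast Finset.card_pos.mpr hA
  have h1 : ((∑ v ∈ A, f v) - ∑ v ∈ B, f v) ^ 2 ≤ A.card * D :=
    hCS.trans (by exact mul_le_mul_of_nonneg_left hkey (le_of_lt hAcard))
  refine ⟨h1, ?_⟩
  rw [hcardB]
  have : ((∑ v ∈ A, f v) / A.card - (∑ v ∈ B, f v) / A.card) ^ 2
      = ((∑ v ∈ A, f v) - ∑ v ∈ B, f v) ^ 2 / (A.card : ℝ) ^ 2 := by
    rw [div_sub_div_same, div_pow]
  rw [this, div_le_div_iff₀ (by positivity) hAcard]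
  calc ((∑ v ∈ A, f v) - ∑ v ∈ B, f v) ^ 2 * A.card
      ≤ (A.card * D) * A.card := by
        exact mul_le_mul_of_nonneg_right h1 (le_of_lt hAcard)
    _ = D * (A.card:ℝ)^2 := by ring
end
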